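/- Let G be a finite simple graph, S ⊆ V(G) with G[S] a cograph, f : S → ℤ≥2, b(X) = |Γ_G(X)| − c_{G[S]}(X) + 2|X| − f(X), and assume b(X) ≥ 1 for all nonempty X ⊆ S. If A and B are disjoint tight sets (b(A) = b(B) = 1) and either U(A,B) ≠ ∅ or some edge of G connects A to B, then A∪B is tight; moreover either |U(A,B)| = 1 and no edge connects A to B, or U(A,B) = ∅. -/

import Mathlib

/-- A cograph: a graph with no induced path on four vertices. -/
def IsCograph {V : Type*} (G : SimpleGraph V) : Prop :=
  ∀ a b c d : V, a ≠ b → a ≠ c → a ≠ d → b ≠ c → b ≠ d → c ≠ d →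
    ¬ (G.Adj a b ∧ G.Adj b c ∧ G.Adj c d ∧ ¬G.Adj a c ∧ ¬G.Adj a d ∧ ¬G.Adj b d)

/-- The open neighborhood of a finite vertex set `X` in `G`. -/
def openNbhd {V : Type*} (G : SimpleGraph V) (X : Finset V) : Set V :=
  {v : V | v ∉ X ∧ ∃ x ∈ X, G.Adj x v}

/-- Number of connected components of the subgraph induced by `X`. -/
noncomputable def numComponents {V : Type*} (G : SimpleGraph V) (X : Finset V) : ℕ :=
  Nat.card (G.induce (X : Set V)).ConnectedComponent

/-- `b(X) = |Γ_G(X)| − c(G[X]) + 2|X| − f(X)`. -/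
noncomputable def bFun {V : Type*} (G : SimpleGraph V) (f : V → ℤ) (X : Finset V) : ℤ :=
  (Nat.card (openNbhd G X) : ℤ) - numComponents G X + 2 * X.card - ∑ x ∈ X, f x

/-- `U(A,B)`: vertices outside `A ∪ B` adjacent to both `A \ B` and `B \ A`
but not to `A ∩ B`. -/
def Uset {V : Type*} [DecidableEq V] (G : SimpleGraph V) (A B : Finset V) : Set V :=
  {w : V | w ∉ A ∪ B ∧ (∃ a ∈ A \ B, G.Adj a w) ∧ (∃ b ∈ B \ A, G.Adj b w) ∧
    ¬ ∃ c ∈ A ∩ B, G.Adj c w}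

set_option linter.unusedSectionVars false
section TightAux
open SimpleGraph
variable {V : Type*} [Fintype V] [DecidableEq V]

lemma card_setOf (p : V → Prop) [DecidablePred p] :
    Nat.card {v | p v} = (Finset.univ.filter p).card := by
  rw [Nat.card_eq_fintype_card]
  exact Fintype.card_subtype p

lemma card_split {α : Type*} [Finite α] (p : α → Prop) :
    Nat.card α = Nat.card {x // p x} + Nat.card {x // ¬ p x} := by
  classical
  rw [← Nat.card_sum]
  exact (Nat.card_congr (Equiv.sumCompl p)).symm

lemma card_ne_point {α : Type*} [Finite α] (c₀ : α) :
    Nat.card {x // ¬ x = c₀} + 1 = Nat.card α := by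
  have h := card_split (α := α) (fun x => x = c₀)
  haveI : Unique {x : α // x = c₀} := ⟨⟨⟨c₀, rfl⟩⟩, by rintro ⟨x, rfl⟩; rfl⟩
  have h1 : Nat.card {x : α // x = c₀} = 1 := Nat.card_unique
  omega

lemma walk_stay (G : SimpleGraph V) {A W : Finset V} (hAW : A ⊆ W) {u : V} (huA : u ∈ A)
    (hfree : ∀ a, (ha : a ∈ A) → (G.induce (A : Set V)).Reachable ⟨u, huA⟩ ⟨a, ha⟩ →
      ∀ w ∈ W, w ∉ A → ¬ G.Adj a w) :
    ∀ w, (hw : w ∈ W) → (G.induce (W : Set V)).Reachable ⟨u, hAW huA⟩ ⟨w, hw⟩ →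
      ∃ ha : w ∈ A, (G.induce (A : Set V)).Reachable ⟨u, huA⟩ ⟨w, ha⟩ := by
  have key : ∀ (x y : ((W : Finset V) : Set V)), (G.induce (W : Set V)).Walk x y →
      (∃ ha : ↑x ∈ A, (G.induce (A : Set V)).Reachable ⟨u, huA⟩ ⟨↑x, ha⟩) →
      (∃ ha : ↑y ∈ A, (G.induce (A : Set V)).Reachable ⟨u, huA⟩ ⟨↑y, ha⟩) := by
    intro x y p
    induction p with
    | nil => exact id
    | @cons x v y h p ih =>
      rintro ⟨hxA, hxr⟩
      have hadj : G.Adj ↑x ↑v := h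
      by_cases hvA : ↑v ∈ A
      · exact ih ⟨hvA, hxr.trans (SimpleGraph.Adj.reachable
          (show (G.induce (A : Set V)).Adj ⟨↑x, hxA⟩ ⟨↑v, hvA⟩ from hadj))⟩
      · exact absurd hadj (hfree ↑x hxA hxr ↑v v.2 hvA)
  intro w hw hr
  obtain ⟨p⟩ := hr
  exact key _ _ p ⟨huA, .refl _⟩


variable (G : SimpleGraph V)

instance compFinite (s : Set V) : Finite (G.induce s).ConnectedComponent :=
  Finite.of_surjective (G.induce s).connectedComponentMk fun c => c.exists_rep

/-- A component of `G[A]` is `B`-free if none of its vertices has a neighbor in `B`. -/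
def Free (A B : Finset V) (C : (G.induce (A : Set V)).ConnectedComponent) : Prop :=
  ∀ a, (ha : a ∈ A) → (G.induce (A : Set V)).connectedComponentMk ⟨a, ha⟩ = C →
    ∀ b ∈ B, ¬ G.Adj a b

/-- The induced map on connected components from `A ⊆ W`. -/
def mapC {A W : Finset V} (h : A ⊆ W) :
    (G.induce (A : Set V)).ConnectedComponent → (G.induce (W : Set V)).ConnectedComponent :=
  ConnectedComponent.map (G.induceHomOfLE (by exact_mod_cast Finset.coe_subset.mpr h)).toHom

lemma mapC_mk {A W : Finset V} (h : A ⊆ W) {a : V} (ha : a ∈ A) :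
    mapC G h ((G.induce (A : Set V)).connectedComponentMk ⟨a, ha⟩)
      = (G.induce (W : Set V)).connectedComponentMk ⟨a, h ha⟩ := rfl

lemma free_pull {A B W : Finset V} (hAW : A ⊆ W) (hW : ∀ w ∈ W, w ∈ A ∨ w ∈ B)
    {u : V} (hu : u ∈ A)
    (hC : Free G A B ((G.induce (A : Set V)).connectedComponentMk ⟨u, hu⟩))
    {w : V} (hw : w ∈ W)
    (hr : (G.induce (W : Set V)).Reachable ⟨u, hAW hu⟩ ⟨w, hw⟩) :
    ∃ ha : w ∈ A, (G.induce (A : Set V)).connectedComponentMk ⟨w, ha⟩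
      = (G.induce (A : Set V)).connectedComponentMk ⟨u, hu⟩ := by
  have hfree : ∀ a, (ha : a ∈ A) → (G.induce (A : Set V)).Reachable ⟨u, hu⟩ ⟨a, ha⟩ →
      ∀ w' ∈ W, w' ∉ A → ¬ G.Adj a w' := by
    intro a ha hra w' hw' hw'A
    have hb : w' ∈ B := (hW w' hw').resolve_left hw'A
    exact hC a ha (ConnectedComponent.sound hra.symm) w' hb
  obtain ⟨ha, hr'⟩ := walk_stay G hAW hu hfree w hw hr
  exact ⟨ha, ConnectedComponent.sound hr'.symm⟩

lemma map_inj_free {A B W : Finset V} (hAW : A ⊆ W) (hW : ∀ w ∈ W, w ∈ A ∨ w ∈ B)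
    {C C' : (G.induce (A : Set V)).ConnectedComponent}
    (hC : Free G A B C) (h : mapC G hAW C = mapC G hAW C') : C = C' := by
  obtain ⟨⟨u, hu⟩, rfl⟩ := C.exists_rep
  obtain ⟨⟨u', hu'⟩, rfl⟩ := C'.exists_rep
  have hr : (G.induce (W : Set V)).Reachable ⟨u, hAW hu⟩ ⟨u', hAW hu'⟩ :=
    ConnectedComponent.exact h
  obtain ⟨ha, he⟩ := free_pull G hAW hW hu hC (hAW hu') hr
  exact he.symm

lemma map_ne_cross {A B W : Finset V} (hd : Disjoint A B) (hAW : A ⊆ W) (hBW : B ⊆ W)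
    (hW : ∀ w ∈ W, w ∈ A ∨ w ∈ B)
    {C : (G.induce (A : Set V)).ConnectedComponent} (hC : Free G A B C)
    (D : (G.induce (B : Set V)).ConnectedComponent) : mapC G hAW C ≠ mapC G hBW D := by
  obtain ⟨⟨u, hu⟩, rfl⟩ := C.exists_rep
  obtain ⟨⟨v, hv⟩, rfl⟩ := D.exists_rep
  intro h
  have hr : (G.induce (W : Set V)).Reachable ⟨u, hAW hu⟩ ⟨v, hBW hv⟩ :=
    ConnectedComponent.exact h
  obtain ⟨ha, -⟩ := free_pull G hAW hW hu hC (hBW hv) hr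
  exact Finset.disjoint_left.mp hd ha hv

lemma map_ne_edge {A B W : Finset V} (hAW : A ⊆ W) (hW : ∀ w ∈ W, w ∈ A ∨ w ∈ B)
    {C : (G.induce (A : Set V)).ConnectedComponent} (hC : Free G A B C)
    {a₀ b₀ : V} (ha₀ : a₀ ∈ A) (hb₀ : b₀ ∈ B) (hadj : G.Adj a₀ b₀) :
    mapC G hAW C ≠ (G.induce (W : Set V)).connectedComponentMk ⟨a₀, hAW ha₀⟩ := by
  obtain ⟨⟨u, hu⟩, rfl⟩ := C.exists_rep
  intro h
  have hr : (G.induce (W : Set V)).Reachable ⟨u, hAW hu⟩ ⟨a₀, hAW ha₀⟩ :=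
    ConnectedComponent.exact h
  obtain ⟨ha, he⟩ := free_pull G hAW hW hu hC (hAW ha₀) hr
  exact hC a₀ ha he b₀ hb₀ hadj

def ESet (A B : Finset V) : Set V := {a : V | a ∈ A ∧ ∃ b ∈ B, G.Adj a b}

lemma comp_count_union (A B : Finset V) :
    numComponents G (A ∪ B) ≤ numComponents G A + numComponents G B := by
  unfold numComponents
  have hAW : A ⊆ A ∪ B := Finset.subset_union_left
  have hBW : B ⊆ A ∪ B := Finset.subset_union_right
  rw [← Nat.card_sum]
  apply Nat.card_le_card_of_surjective (Sum.elim (mapC G hAW) (mapC G hBW))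
  intro c
  obtain ⟨⟨w, hw⟩, rfl⟩ := c.exists_rep
  rcases Finset.mem_union.mp hw with h | h
  · exact ⟨Sum.inl ((G.induce (A : Set V)).connectedComponentMk ⟨w, h⟩), rfl⟩
  · exact ⟨Sum.inr ((G.induce (B : Set V)).connectedComponentMk ⟨w, h⟩), rfl⟩

lemma comp_count_noedge {A B : Finset V} (hd : Disjoint A B)
    (hne : ¬ ∃ a ∈ A, ∃ b ∈ B, G.Adj a b) :
    numComponents G A + numComponents G B ≤ numComponents G (A ∪ B) := by
  unfold numComponents
  have hAW : A ⊆ A ∪ B := Finset.subset_union_left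
  have hBW : B ⊆ A ∪ B := Finset.subset_union_right
  have hW : ∀ w ∈ A ∪ B, w ∈ A ∨ w ∈ B := fun w hw => Finset.mem_union.mp hw
  have hW' : ∀ w ∈ A ∪ B, w ∈ B ∨ w ∈ A := fun w hw => (Finset.mem_union.mp hw).symm
  have hFA : ∀ C, Free G A B C := by
    intro C a ha _ b hb hadj; exact hne ⟨a, ha, b, hb, hadj⟩
  have hFB : ∀ D, Free G B A D := by
    intro D b hb _ a ha hadj; exact hne ⟨a, ha, b, hb, hadj.symm⟩
  rw [← Nat.card_sum]
  apply Nat.card_le_card_of_injective (Sum.elim (mapC G hAW) (mapC G hBW))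
  rintro (C | D) (C' | D') h
  · exact congrArg Sum.inl (map_inj_free G hAW hW (hFA C) h)
  · exact absurd h (map_ne_cross G hd hAW hBW hW (hFA C) D')
  · exact absurd h.symm (map_ne_cross G hd hAW hBW hW (hFA C') D)
  · exact congrArg Sum.inr (map_inj_free G hBW hW' (hFB D) h)

lemma comp_count_edge {A B : Finset V} (hd : Disjoint A B)
    {a₀ b₀ : V} (ha₀ : a₀ ∈ A) (hb₀ : b₀ ∈ B) (hadj : G.Adj a₀ b₀) :
    numComponents G A + numComponents G B + 1
      ≤ numComponents G (A ∪ B) + Nat.card (ESet G A B) + Nat.card (ESet G B A) := by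
  classical
  unfold numComponents
  have hAW : A ⊆ A ∪ B := Finset.subset_union_left
  have hBW : B ⊆ A ∪ B := Finset.subset_union_right
  have hW : ∀ w ∈ A ∪ B, w ∈ A ∨ w ∈ B := fun w hw => Finset.mem_union.mp hw
  have hW' : ∀ w ∈ A ∪ B, w ∈ B ∨ w ∈ A := fun w hw => (Finset.mem_union.mp hw).symm
  -- split each component count into free and non-free parts
  have hsplitA := card_split (Free G A B)
  have hsplitB := card_split (Free G B A)
  -- non-free components inject into edge-endpoint sets
  have hinjA : Nat.card {C // ¬ Free G A B C} ≤ Nat.card (ESet G A B) := by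
    have hex : ∀ C : {C : (G.induce (A : Set V)).ConnectedComponent // ¬ Free G A B C},
        ∃ a : V, ∃ ha : a ∈ A,
          (G.induce (A : Set V)).connectedComponentMk ⟨a, ha⟩ = C.1 ∧ ∃ b ∈ B, G.Adj a b := by
      rintro ⟨C, hC⟩
      unfold _root_.Free at hC
      push_neg at hC
      obtain ⟨a, ha, hmk, b, hb, hadj'⟩ := hC
      exact ⟨a, ha, hmk, b, hb, hadj'⟩
    choose av hav hmk hbv using hex
    apply Nat.card_le_card_of_injective (fun C => (⟨av C, hav C, hbv C⟩ : ESet G A B))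
    intro C C' h
    have hval : av C = av C' := congrArg Subtype.val h
    apply Subtype.ext
    rw [← hmk C, ← hmk C']
    congr 1
    exact Subtype.ext hval
  have hinjB : Nat.card {D // ¬ Free G B A D} ≤ Nat.card (ESet G B A) := by
    have hex : ∀ D : {D : (G.induce (B : Set V)).ConnectedComponent // ¬ Free G B A D},
        ∃ b : V, ∃ hb : b ∈ B,
          (G.induce (B : Set V)).connectedComponentMk ⟨b, hb⟩ = D.1 ∧ ∃ a ∈ A, G.Adj b a := by
      rintro ⟨D, hD⟩
      unfold _root_.Free at hD
      push_neg at hD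
      obtain ⟨b, hb, hmk, a, ha, hadj'⟩ := hD
      exact ⟨b, hb, hmk, a, ha, hadj'⟩
    choose bv hbv hmk hav using hex
    apply Nat.card_le_card_of_injective (fun D =>
      (⟨bv D, hbv D, hav D⟩ : ESet G B A))
    intro D D' h
    have hval : bv D = bv D' := congrArg Subtype.val h
    apply Subtype.ext
    rw [← hmk D, ← hmk D']
    congr 1
    exact Subtype.ext hval
  -- free components inject into components of the union avoiding the component of a₀
  set c₀ := (G.induce ((A ∪ B : Finset V) : Set V)).connectedComponentMk ⟨a₀, hAW ha₀⟩ with hc₀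
  have hco : c₀ = (G.induce ((A ∪ B : Finset V) : Set V)).connectedComponentMk ⟨b₀, hBW hb₀⟩ :=
    ConnectedComponent.sound (SimpleGraph.Adj.reachable
      (show (G.induce ((A ∪ B : Finset V) : Set V)).Adj ⟨a₀, hAW ha₀⟩ ⟨b₀, hBW hb₀⟩ from hadj))
  have hinjF : Nat.card ({C // Free G A B C} ⊕ {D // Free G B A D})
      ≤ Nat.card {c : (G.induce ((A ∪ B : Finset V) : Set V)).ConnectedComponent // ¬ c = c₀} := by
    apply Nat.card_le_card_of_injective (Sum.elim
      (fun C => ⟨mapC G hAW C.1, map_ne_edge G hAW hW C.2 ha₀ hb₀ hadj⟩)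
      (fun D => ⟨mapC G hBW D.1, by
        rw [hco]
        exact map_ne_edge G hBW hW' D.2 hb₀ ha₀ hadj.symm⟩))
    rintro (⟨C, hC⟩ | ⟨D, hD⟩) (⟨C', hC'⟩ | ⟨D', hD'⟩) h
    · exact congrArg Sum.inl (Subtype.ext (map_inj_free G hAW hW hC (congrArg Subtype.val h)))
    · exact absurd (congrArg Subtype.val h) (map_ne_cross G hd hAW hBW hW hC D')
    · exact absurd (congrArg Subtype.val h).symm (map_ne_cross G hd hAW hBW hW hC' D)
    · exact congrArg Sum.inr (Subtype.ext (map_inj_free G hBW hW' hD (congrArg Subtype.val h)))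
  rw [Nat.card_sum] at hinjF
  have hpt := card_ne_point c₀
  have e1 : numComponents G A = Nat.card {C // Free G A B C} + Nat.card {C // ¬ Free G A B C} :=
    hsplitA
  have e2 : numComponents G B = Nat.card {D // Free G B A D} + Nat.card {D // ¬ Free G B A D} :=
    hsplitB
  have e3 : numComponents G (A ∪ B)
      = Nat.card (G.induce ((A ∪ B : Finset V) : Set V)).ConnectedComponent := rfl
  omega
lemma nbhd_count {A B : Finset V} (hd : Disjoint A B) :
    Nat.card (openNbhd G A) + Nat.card (openNbhd G B)
      = Nat.card (openNbhd G (A ∪ B)) + Nat.card (Uset G A B)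
        + Nat.card (ESet G A B) + Nat.card (ESet G B A) := by
  classical
  unfold openNbhd Uset ESet
  rw [card_setOf, card_setOf, card_setOf, card_setOf, card_setOf, card_setOf]
  rw [Finset.card_filter, Finset.card_filter, Finset.card_filter, Finset.card_filter,
    Finset.card_filter, Finset.card_filter]
  rw [← Finset.sum_add_distrib, ← Finset.sum_add_distrib, ← Finset.sum_add_distrib,
    ← Finset.sum_add_distrib]
  apply Finset.sum_congr rfl
  intro v _
  by_cases hvA : v ∈ A <;> by_cases hvB : v ∈ B
  · exact absurd hvB (Finset.disjoint_left.mp hd hvA)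
  · -- v ∈ A, v ∉ B
    have h1 : ¬ (v ∉ A ∧ ∃ x ∈ A, G.Adj x v) := fun h => h.1 hvA
    have h2 : ¬ (v ∉ A ∪ B ∧ ∃ x ∈ A ∪ B, G.Adj x v) :=
      fun h => h.1 (Finset.mem_union_left _ hvA)
    have h3 : ¬ (v ∉ A ∪ B ∧ (∃ a ∈ A \ B, G.Adj a v) ∧ (∃ b ∈ B \ A, G.Adj b v) ∧
        ¬ ∃ c ∈ A ∩ B, G.Adj c v) := fun h => h.1 (Finset.mem_union_left _ hvA)
    have h4 : ¬ (v ∈ B ∧ ∃ a ∈ A, G.Adj v a) := fun h => hvB h.1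
    have h5 : (v ∉ B ∧ ∃ x ∈ B, G.Adj x v) ↔ (v ∈ A ∧ ∃ b ∈ B, G.Adj v b) := by
      constructor
      · rintro ⟨-, x, hx, hadj⟩; exact ⟨hvA, x, hx, hadj.symm⟩
      · rintro ⟨-, x, hx, hadj⟩; exact ⟨hvB, x, hx, hadj.symm⟩
    rw [if_neg h1, if_neg h2, if_neg h3, if_neg h4, if_congr h5 rfl rfl]
    omega
  · -- v ∈ B, v ∉ A
    have h1 : ¬ (v ∉ B ∧ ∃ x ∈ B, G.Adj x v) := fun h => h.1 hvB
    have h2 : ¬ (v ∉ A ∪ B ∧ ∃ x ∈ A ∪ B, G.Adj x v) :=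
      fun h => h.1 (Finset.mem_union_right _ hvB)
    have h3 : ¬ (v ∉ A ∪ B ∧ (∃ a ∈ A \ B, G.Adj a v) ∧ (∃ b ∈ B \ A, G.Adj b v) ∧
        ¬ ∃ c ∈ A ∩ B, G.Adj c v) := fun h => h.1 (Finset.mem_union_right _ hvB)
    have h4 : ¬ (v ∈ A ∧ ∃ b ∈ B, G.Adj v b) := fun h => hvA h.1
    have h5 : (v ∉ A ∧ ∃ x ∈ A, G.Adj x v) ↔ (v ∈ B ∧ ∃ a ∈ A, G.Adj v a) := by
      constructor
      · rintro ⟨-, x, hx, hadj⟩; exact ⟨hvB, x, hx, hadj.symm⟩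
      · rintro ⟨-, x, hx, hadj⟩; exact ⟨hvA, x, hx, hadj.symm⟩
    rw [if_congr h5 rfl rfl, if_neg h1, if_neg h2, if_neg h3, if_neg h4]
    omega
  · -- v outside both
    have hvAB : v ∉ A ∪ B := fun h => (Finset.mem_union.mp h).elim hvA hvB
    have h4 : ¬ (v ∈ A ∧ ∃ b ∈ B, G.Adj v b) := fun h => hvA h.1
    have h4' : ¬ (v ∈ B ∧ ∃ a ∈ A, G.Adj v a) := fun h => hvB h.1
    have h1 : (v ∉ A ∧ ∃ x ∈ A, G.Adj x v) ↔ (∃ x ∈ A, G.Adj x v) :=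
      ⟨fun h => h.2, fun h => ⟨hvA, h⟩⟩
    have h2 : (v ∉ B ∧ ∃ x ∈ B, G.Adj x v) ↔ (∃ x ∈ B, G.Adj x v) :=
      ⟨fun h => h.2, fun h => ⟨hvB, h⟩⟩
    have h3 : (v ∉ A ∪ B ∧ ∃ x ∈ A ∪ B, G.Adj x v) ↔
        ((∃ x ∈ A, G.Adj x v) ∨ (∃ x ∈ B, G.Adj x v)) := by
      constructor
      · rintro ⟨-, x, hx, hadj⟩
        rcases Finset.mem_union.mp hx with h | h
        · exact Or.inl ⟨x, h, hadj⟩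
        · exact Or.inr ⟨x, h, hadj⟩
      · rintro (⟨x, hx, hadj⟩ | ⟨x, hx, hadj⟩)
        · exact ⟨hvAB, x, Finset.mem_union_left _ hx, hadj⟩
        · exact ⟨hvAB, x, Finset.mem_union_right _ hx, hadj⟩
    have hU : (v ∉ A ∪ B ∧ (∃ a ∈ A \ B, G.Adj a v) ∧ (∃ b ∈ B \ A, G.Adj b v) ∧
        ¬ ∃ c ∈ A ∩ B, G.Adj c v) ↔ ((∃ x ∈ A, G.Adj x v) ∧ (∃ x ∈ B, G.Adj x v)) := by
      constructor
      · rintro ⟨-, ⟨a, ha, hadj⟩, ⟨b, hb, hadj'⟩, -⟩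
        exact ⟨⟨a, (Finset.mem_sdiff.mp ha).1, hadj⟩, ⟨b, (Finset.mem_sdiff.mp hb).1, hadj'⟩⟩
      · rintro ⟨⟨a, ha, hadj⟩, ⟨b, hb, hadj'⟩⟩
        refine ⟨hvAB, ⟨a, Finset.mem_sdiff.mpr ⟨ha, Finset.disjoint_left.mp hd ha⟩, hadj⟩,
          ⟨b, Finset.mem_sdiff.mpr ⟨hb, Finset.disjoint_right.mp hd hb⟩, hadj'⟩, ?_⟩
        rintro ⟨c, hc, -⟩
        exact Finset.disjoint_left.mp hd (Finset.mem_inter.mp hc).1 (Finset.mem_inter.mp hc).2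
    rw [if_congr h1 rfl rfl, if_congr h2 rfl rfl, if_congr h3 rfl rfl, if_congr hU rfl rfl,
      if_neg h4, if_neg h4']
    by_cases hA' : ∃ x ∈ A, G.Adj x v <;> by_cases hB' : ∃ x ∈ B, G.Adj x v <;>
      simp [hA', hB']
end TightAux
/-- Union of disjoint tight sets connected by an edge or a `U`-vertex is tight;
moreover either `|U(A,B)| = 1` and no edge connects `A` to `B`, or
`U(A,B) = ∅`. -/

theorem tight_disjoint
    {V : Type*} [Fintype V] [DecidableEq V] (G : SimpleGraph V) (S : Finset V)
    (f : V → ℤ) (hf : ∀ v ∈ S, 2 ≤ f v)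
    (hcog : IsCograph (G.induce (S : Set V)))
    (hcond : ∀ X : Finset V, X ⊆ S → X.Nonempty → 1 ≤ bFun G f X)
    (A B : Finset V) (hA : A ⊆ S) (hB : B ⊆ S)
    (hAne : A.Nonempty) (hBne : B.Nonempty) (hdisj : Disjoint A B)
    (htA : bFun G f A = 1) (htB : bFun G f B = 1)
    (hlink : (Uset G A B).Nonempty ∨ ∃ a ∈ A, ∃ b ∈ B, G.Adj a b) :
    bFun G f (A ∪ B) = 1 ∧
      ((Nat.card (Uset G A B) = 1 ∧ ¬ ∃ a ∈ A, ∃ b ∈ B, G.Adj a b) ∨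
        Uset G A B = ∅) := by
  classical
  have hUnion : (A ∪ B).Nonempty := ⟨hAne.choose, Finset.mem_union_left _ hAne.choose_spec⟩
  have hb := hcond (A ∪ B) (Finset.union_subset hA hB) hUnion
  have hN := nbhd_count G hdisj
  have hL1 := comp_count_union G A B
  have hcard : (A ∪ B).card = A.card + B.card := Finset.card_union_of_disjoint hdisj
  have hsum : ∑ x ∈ A ∪ B, f x = ∑ x ∈ A, f x + ∑ x ∈ B, f x := Finset.sum_union hdisj
  unfold bFun at htA htB hb ⊢
  rw [hcard, hsum] at hb ⊢
  by_cases hedge : ∃ a ∈ A, ∃ b ∈ B, G.Adj a b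
  · obtain ⟨a₀, ha₀, b₀, hb₀, hadj⟩ := hedge
    have hL3 := comp_count_edge G hdisj ha₀ hb₀ hadj
    have hU0 : Nat.card (Uset G A B) = 0 := by push_cast at *; omega
    have hUempty : Uset G A B = ∅ := by
      have : IsEmpty (Uset G A B) := by
        rcases Nat.card_eq_zero.mp hU0 with h | h
        · exact h
        · exact absurd h (not_infinite_iff_finite.mpr (Set.toFinite _))
      exact Set.isEmpty_coe_sort.mp this
    exact ⟨by push_cast at *; omega, Or.inr hUempty⟩
  · have hUne : (Uset G A B).Nonempty := hlink.resolve_right hedge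
    have hL2 := comp_count_noedge G hdisj hedge
    have hEA0 : Nat.card (ESet G A B) = 0 := by
      have : IsEmpty (ESet G A B) :=
        ⟨fun x => hedge ⟨x.1, x.2.1, x.2.2⟩⟩
      exact Nat.card_of_isEmpty
    have hEB0 : Nat.card (ESet G B A) = 0 := by
      have : IsEmpty (ESet G B A) :=
        ⟨fun x => by obtain ⟨hxB, a, ha, hadj⟩ := x.2; exact hedge ⟨a, ha, x.1, hxB, hadj.symm⟩⟩
      exact Nat.card_of_isEmpty
    have hU1 : 0 < Nat.card (Uset G A B) := by
      haveI := hUne.to_subtype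
      exact Nat.card_pos
    exact ⟨by push_cast at *; omega, Or.inl ⟨by push_cast at *; omega, hedge⟩⟩
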